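/- Volume of a null-faced 4-simplex from its face areas: let v₀,…,v₄ ∈ ℝ⁴ be affinely independent, eᵢ = vᵢ − v₀, E the matrix with columns e₁,…,e₄, and mᵢ ∈ ℝ⁴ the vectors with η(mᵢ, v) = det(E with i-th column replaced by v) for all v. Assume η(mᵢ,mᵢ) = 0 for i = 1,…,4 (the four hyperfaces through v₀ are null). Define the symmetric 4×4 matrix S by S_{ii} = 0 and S_{ij} = η(mᵢ,mⱼ)/(2|det E|) for i ≠ j. Then for i ≠ j with complementary indices {k,l} = {1,2,3,4}∖{i,j}, one has η(mᵢ,mⱼ)² = (det E)² (η(e_k,e_k)η(e_l,e_l) − η(e_k,e_l)²), so |S_{ij}| is the area of the triangular face with vertices v₀, v₀+e_k, v₀+e_l; and the simplex volume Ω = |det E|/4! satisfies Ω = (1/6)·|det S|^{1/2}. -/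

import Mathlib

/-- The Minkowski bilinear form on `ℝ⁴` with signature `(-,+,+,+)`. -/
def eta (x y : Fin 4 → ℝ) : ℝ :=
  -(x 0 * y 0) + x 1 * y 1 + x 2 * y 2 + x 3 * y 3

/-- The 4×4 matrix whose columns are the vectors `e 0, e 1, e 2, e 3`. -/
def cols (e : Fin 4 → Fin 4 → ℝ) : Matrix (Fin 4) (Fin 4) ℝ :=
  Matrix.of fun i j => e j i

lemma sa00 : ((0:Fin 4).succAbove (0:Fin 3)) = 1 := rfl
lemma sa01 : ((0:Fin 4).succAbove (1:Fin 3)) = 2 := rfl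
lemma sa02 : ((0:Fin 4).succAbove (2:Fin 3)) = 3 := rfl
lemma sa10 : ((1:Fin 4).succAbove (0:Fin 3)) = 0 := rfl
lemma sa11 : ((1:Fin 4).succAbove (1:Fin 3)) = 2 := rfl
lemma sa12 : ((1:Fin 4).succAbove (2:Fin 3)) = 3 := rfl
lemma sa20 : ((2:Fin 4).succAbove (0:Fin 3)) = 0 := rfl
lemma sa21 : ((2:Fin 4).succAbove (1:Fin 3)) = 1 := rfl
lemma sa22 : ((2:Fin 4).succAbove (2:Fin 3)) = 3 := rfl
lemma sa30 : ((3:Fin 4).succAbove (0:Fin 3)) = 0 := rfl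
lemma sa31 : ((3:Fin 4).succAbove (1:Fin 3)) = 1 := rfl
lemma sa32 : ((3:Fin 4).succAbove (2:Fin 3)) = 2 := rfl

lemma fs0 : (Fin.succ (0:Fin 3)) = 1 := rfl
lemma fs1 : (Fin.succ (1:Fin 3)) = 2 := rfl
lemma fs2 : (Fin.succ (2:Fin 3)) = 3 := rfl
lemma v3 : Fin.val (3:Fin 4) = 3 := rfl

lemma det_fin_four' (A : Matrix (Fin 4) (Fin 4) ℝ) : A.det = A 0 0 * A 1 1 * A 2 2 * A 3 3 - A 0 0 * A 1 1 * A 2 3 * A 3 2 - A 0 0 * A 1 2 * A 2 1 * A 3 3 + A 0 0 * A 1 2 * A 2 3 * A 3 1 + A 0 0 * A 1 3 * A 2 1 * A 3 2 - A 0 0 * A 1 3 * A 2 2 * A 3 1 - A 0 1 * A 1 0 * A 2 2 * A 3 3 + A 0 1 * A 1 0 * A 2 3 * A 3 2 + A 0 1 * A 1 2 * A 2 0 * A 3 3 - A 0 1 * A 1 2 * A 2 3 * A 3 0 - A 0 1 * A 1 3 * A 2 0 * A 3 2 + A 0 1 * A 1 3 * A 2 2 * A 3 0 + A 0 2 * A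 1 0 * A 2 1 * A 3 3 - A 0 2 * A 1 0 * A 2 3 * A 3 1 - A 0 2 * A 1 1 * A 2 0 * A 3 3 + A 0 2 * A 1 1 * A 2 3 * A 3 0 + A 0 2 * A 1 3 * A 2 0 * A 3 1 - A 0 2 * A 1 3 * A 2 1 * A 3 0 - A 0 3 * A 1 0 * A 2 1 * A 3 2 + A 0 3 * A 1 0 * A 2 2 * A 3 1 + A 0 3 * A 1 1 * A 2 0 * A 3 2 - A 0 3 * A 1 1 * A 2 2 * A 3 0 - A 0 3 * A 1 2 * A 2 0 * A 3 1 + A 0 3 * A 1 2 * A 2 1 * A 3 0 := by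
  rw [Matrix.det_succ_row_zero]
  simp only [Fin.sum_univ_four, Matrix.det_fin_three, Matrix.submatrix_apply,
    sa00, sa01, sa02, sa10, sa11, sa12, sa20, sa21, sa22, sa30, sa31, sa32,
    Fin.val_zero, Fin.val_one, Fin.val_two, fs0, fs1, fs2, v3]
  norm_num
  ring


lemma jc_base (B : Matrix (Fin 4) (Fin 4) ℝ) :
    B.adjugate 0 0 * B.adjugate 1 1 - B.adjugate 0 1 * B.adjugate 1 0
      = B.det * (B 2 2 * B 3 3 - B 2 3 * B 3 2) := by
  rw [Matrix.adjugate_fin_succ_eq_det_submatrix, Matrix.adjugate_fin_succ_eq_det_submatrix,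
    Matrix.adjugate_fin_succ_eq_det_submatrix, Matrix.adjugate_fin_succ_eq_det_submatrix,
    det_fin_four']
  simp only [Matrix.det_fin_three, Matrix.submatrix_apply,
    sa00, sa01, sa02, sa10, sa11, sa12, sa20, sa21, sa22, sa30, sa31, sa32,
    Fin.val_zero, Fin.val_one]
  norm_num
  ring

lemma jacobi4 (M : Matrix (Fin 4) (Fin 4) ℝ) (i j k l : Fin 4)
    (h : ({i, j, k, l} : Finset (Fin 4)) = Finset.univ) :
    M.adjugate i i * M.adjugate j j - M.adjugate i j * M.adjugate j i
      = M.det * (M k k * M l l - M k l * M l k) := by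
  have hsurj : Function.Surjective ![i, j, k, l] := by
    intro y
    have hy : y ∈ ({i, j, k, l} : Finset (Fin 4)) := h ▸ Finset.mem_univ y
    simp only [Finset.mem_insert, Finset.mem_singleton] at hy
    rcases hy with rfl | rfl | rfl | rfl
    exacts [⟨0, rfl⟩, ⟨1, rfl⟩, ⟨2, rfl⟩, ⟨3, rfl⟩]
  have hbij : Function.Bijective ![i, j, k, l] := Finite.surjective_iff_bijective.mp hsurj
  let σ : Fin 4 ≃ Fin 4 := Equiv.ofBijective _ hbij
  have hb := jc_base (M.submatrix σ σ)
  rw [Matrix.adjugate_submatrix_equiv_self, Matrix.det_submatrix_equiv_self] at hb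
  simpa [σ] using hb

open Matrix

lemma updCol_det (A : Matrix (Fin 4) (Fin 4) ℝ) (i a : Fin 4) :
    (A.updateCol i (Pi.single a 1)).det = A.adjugate i a := by
  rw [← Matrix.cramer_apply]
  have h2 : A.adjugate i a = Aᵀ.adjugate a i := by rw [← Matrix.adjugate_transpose]; rfl
  rw [h2, Matrix.adjugate_def]
  simp

/-- Volume of a null-faced 4-simplex from its face areas: if the four volume
normals `mᵢ` (defined from the edge matrix `E` by column replacement) are null,
and `S` is the symmetric matrix with `Sᵢᵢ = 0`, `Sᵢⱼ = η(mᵢ,mⱼ)/(2|det E|)`,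
then for complementary index pairs `{i,j}`, `{k,l}`, the product `η(mᵢ,mⱼ)²`
equals `(det E)²` times the squared parallelogram area of `e_k, e_l` (so
`|Sᵢⱼ|` is the area of the triangular face with vertices `v₀, v₀+e_k, v₀+e_l`),
and the simplex volume `Ω = |det E|/4!` satisfies `Ω = (1/6)·|det S|^{1/2}`. -/
theorem nullFaced_simplex_volume_from_areas (v : Fin 5 → Fin 4 → ℝ)
    (hv : AffineIndependent ℝ v)
    (e : Fin 4 → Fin 4 → ℝ) (he : ∀ i, e i = v i.succ - v 0)
    (m : Fin 4 → Fin 4 → ℝ)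
    (hm : ∀ i w, eta (m i) w = ((cols e).updateCol i w).det)
    (hnull : ∀ i, eta (m i) (m i) = 0)
    (S : Matrix (Fin 4) (Fin 4) ℝ)
    (hS : ∀ i j, S i j =
      if i = j then 0 else eta (m i) (m j) / (2 * |(cols e).det|)) :
    (∀ i j k l : Fin 4, ({i, j, k, l} : Finset (Fin 4)) = Finset.univ →
      eta (m i) (m j) ^ 2 =
        (cols e).det ^ 2 * (eta (e k) (e k) * eta (e l) (e l) - eta (e k) (e l) ^ 2) ∧
      |S i j| =
        (1 / 2) * Real.sqrt (eta (e k) (e k) * eta (e l) (e l) - eta (e k) (e l) ^ 2)) ∧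
    |(cols e).det| / 24 = (1 / 6) * Real.sqrt |S.det| := by
  -- notation
  set E := cols e with hE
  set d := E.det with hdDef
  -- linear independence and d ≠ 0
  have hli : LinearIndependent ℝ e := by
    have h1 := (affineIndependent_iff_linearIndependent_vsub ℝ v 0).mp hv
    have h2 := h1.comp (fun i : Fin 4 => (⟨i.succ, Fin.succ_ne_zero i⟩ : {x : Fin 5 // x ≠ 0}))
      (fun a b hab => by
        have := congrArg Subtype.val hab
        simpa [Fin.succ_inj] using this)
    have : e = (fun i : Fin 4 => v i.succ - v 0) := funext fun i => he i
    rw [this]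
    exact h2
  have hd : d ≠ 0 := by
    have hrows : LinearIndependent ℝ (fun i => Eᵀ i) := by
      have : (fun i => Eᵀ i) = e := by funext i; rfl
      rw [this]; exact hli
    have hU : IsUnit Eᵀ := Matrix.linearIndependent_rows_iff_isUnit.mp hrows
    have : IsUnit Eᵀ.det := (Matrix.isUnit_iff_isUnit_det _).mp hU
    rw [Matrix.det_transpose] at this
    exact isUnit_iff_ne_zero.mp this
  -- components of m in terms of the adjugate
  have hmadj : ∀ i a, eta (m i) (Pi.single a 1) = E.adjugate i a := by
    intro i a
    rw [hm, updCol_det]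
  have hm0 : ∀ i, m i 0 = -E.adjugate i 0 := by
    intro i
    have := hmadj i 0
    simp [eta, Pi.single_apply] at this
    linarith
  have hm1 : ∀ i, m i 1 = E.adjugate i 1 := by
    intro i
    have := hmadj i 1
    simpa [eta, Pi.single_apply] using this
  have hm2 : ∀ i, m i 2 = E.adjugate i 2 := by
    intro i
    have := hmadj i 2
    simpa [eta, Pi.single_apply] using this
  have hm3 : ∀ i, m i 3 = E.adjugate i 3 := by
    intro i
    have := hmadj i 3
    simpa [eta, Pi.single_apply] using this
  -- the Minkowski metric matrix
  set sgn : Fin 4 → ℝ := ![-1, 1, 1, 1] with hsgn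
  have hs0 : sgn 0 = -1 := rfl
  have hs1 : sgn 1 = 1 := rfl
  have hs2 : sgn 2 = 1 := rfl
  have hs3 : sgn 3 = 1 := rfl
  set J : Matrix (Fin 4) (Fin 4) ℝ := Matrix.diagonal sgn with hJ
  have hJJ : J * J = 1 := by
    rw [hJ, Matrix.diagonal_mul_diagonal]
    rw [show (fun i => sgn i * sgn i) = fun _ : Fin 4 => (1:ℝ) from
      funext fun a => by fin_cases a <;> norm_num [hsgn]]
    exact Matrix.diagonal_one
  have hJT : Jᵀ = J := Matrix.diagonal_transpose sgn
  -- the matrices N and G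
  set N : Matrix (Fin 4) (Fin 4) ℝ := E.adjugate * J * E.adjugateᵀ with hNdef
  set G : Matrix (Fin 4) (Fin 4) ℝ := Matrix.of fun i j => eta (e i) (e j) with hGdef
  have hN : ∀ i j, eta (m i) (m j) = N i j := by
    intro i j
    have : N i j = ∑ b : Fin 4, E.adjugate i b * sgn b * E.adjugate j b := by
      rw [hNdef, Matrix.mul_apply]
      congr 1
      funext b
      rw [Matrix.mul_diagonal, Matrix.transpose_apply]
    rw [this, Fin.sum_univ_four, hs0, hs1, hs2, hs3]
    simp only [eta, hm0 i, hm1 i, hm2 i, hm3 i, hm0 j, hm1 j, hm2 j, hm3 j]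
    ring
  have hG : G = Eᵀ * J * E := by
    ext i j
    have : (Eᵀ * J * E) i j = ∑ b : Fin 4, Eᵀ i b * sgn b * E b j := by
      rw [Matrix.mul_apply]
      congr 1
      funext b
      rw [Matrix.mul_diagonal]
    rw [this, Fin.sum_univ_four, hs0, hs1, hs2, hs3]
    simp only [hGdef, Matrix.of_apply, Matrix.transpose_apply, hE, cols, eta]
    ring
  -- N * G = d² • 1
  have hadj1 : E * E.adjugate = d • 1 := Matrix.mul_adjugate E
  have hadj2 : E.adjugate * E = d • 1 := Matrix.adjugate_mul E
  have hNG : N * G = (d ^ 2) • 1 := by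
    have h1 : E.adjugateᵀ * Eᵀ = d • 1 := by
      rw [← Matrix.transpose_mul, hadj1]
      rw [Matrix.transpose_smul, Matrix.transpose_one]
    calc N * G = E.adjugate * J * (E.adjugateᵀ * Eᵀ) * J * E := by
          rw [hNdef, hG]; noncomm_ring
      _ = d • (E.adjugate * (J * J) * E) := by
          rw [h1]; rw [Matrix.mul_smul, Matrix.smul_mul, Matrix.smul_mul, Matrix.mul_one]
          noncomm_ring
      _ = d • (E.adjugate * E) := by rw [hJJ, Matrix.mul_one]
      _ = (d ^ 2) • 1 := by rw [hadj2, smul_smul]; ring_nf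
  have hdetJ : J.det = -1 := by
    rw [hJ, Matrix.det_diagonal, Fin.prod_univ_four, hs0, hs1, hs2, hs3]
    norm_num
  have hdetG : G.det = -d ^ 2 := by
    rw [hG, Matrix.det_mul, Matrix.det_mul, Matrix.det_transpose, hdetJ]
    ring
  -- symmetry
  have hGsym : Gᵀ = G := by
    ext i j
    simp only [Matrix.transpose_apply, hGdef, Matrix.of_apply, eta]
    ring
  have hNsym : Nᵀ = N := by
    rw [hNdef]
    rw [Matrix.transpose_mul, Matrix.transpose_mul, Matrix.transpose_transpose, hJT]
    noncomm_ring
  have hGN : G * N = (d ^ 2) • 1 := by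
    have := congrArg Matrix.transpose hNG
    rw [Matrix.transpose_mul, hGsym, hNsym, Matrix.transpose_smul, Matrix.transpose_one] at this
    exact this
  -- N = -adjugate G
  have hGdetu : IsUnit G.det := by
    rw [hdetG]
    exact isUnit_iff_ne_zero.mpr (by
      intro hcon
      apply hd
      have : d ^ 2 = 0 := by linarith [neg_eq_zero.mp hcon]
      exact pow_eq_zero_iff (by norm_num) |>.mp this)
  have hNadjG : N = -G.adjugate := by
    have hinv : Invertible G := G.invertibleOfIsUnitDet hGdetu
    apply Matrix.mul_right_injective_of_invertible G
    show G * N = G * (-G.adjugate)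
    rw [hGN, Matrix.mul_neg, Matrix.mul_adjugate, hdetG]
    simp [neg_smul]
  have hdetN : N.det = -d ^ 6 := by
    rw [hNadjG, Matrix.det_neg, Matrix.det_adjugate, hdetG]
    simp [Fintype.card_fin]
    ring
  constructor
  · -- part 1
    intro i j k l h
    have hij : i ≠ j := by
      rintro rfl
      have h4 : ({i, i, k, l} : Finset (Fin 4)).card = 4 := by rw [h]; rfl
      have hle : ({i, i, k, l} : Finset (Fin 4)).card ≤ 3 := by
        rw [Finset.insert_idem]
        refine (Finset.card_insert_le _ _).trans ?_
        exact Nat.succ_le_succ ((Finset.card_insert_le _ _).trans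
          (Nat.succ_le_succ (Finset.card_singleton l ▸ le_refl 1)))
      omega
    have hjac := jacobi4 G i j k l h
    have hadjN : ∀ a b, G.adjugate a b = -eta (m a) (m b) := by
      intro a b
      have : G.adjugate = -N := by rw [hNadjG]; simp
      rw [this]
      simp [hN a b]
    have hGe : ∀ a b, G a b = eta (e a) (e b) := fun a b => rfl
    have hetasym : ∀ x y, eta x y = eta y x := by intro x y; simp [eta]; ring
    have key : eta (m i) (m j) ^ 2 =
        d ^ 2 * (eta (e k) (e k) * eta (e l) (e l) - eta (e k) (e l) ^ 2) := by
      rw [hadjN, hadjN, hadjN, hadjN, hdetG, hGe, hGe, hGe, hGe] at hjac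
      rw [hnull i, hnull j] at hjac
      have hji : eta (m j) (m i) = eta (m i) (m j) := hetasym _ _
      rw [hji] at hjac
      have hlk : eta (e l) (e k) = eta (e k) (e l) := hetasym _ _
      rw [hlk] at hjac
      nlinarith [hjac]
    refine ⟨key, ?_⟩
    -- area equality
    have hXpos : eta (e k) (e k) * eta (e l) (e l) - eta (e k) (e l) ^ 2 =
        (eta (m i) (m j) / d) ^ 2 := by
      field_simp
      nlinarith [key]
    rw [hS i j, if_neg hij, hXpos, Real.sqrt_sq_eq_abs]
    rw [abs_div, abs_div]
    rw [abs_of_nonneg (by positivity : (0:ℝ) ≤ 2 * |d|)]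
    have hdne : |d| ≠ 0 := abs_ne_zero.mpr hd
    field_simp
  · -- part 2
    have hSN : S = (2 * |d|)⁻¹ • N := by
      ext a b
      rw [hS a b]
      by_cases hab : a = b
      · subst hab
        rw [if_pos rfl]
        simp [← hN a a, hnull a]
      · rw [if_neg hab]
        simp [← hN a b, div_eq_inv_mul]
    have hdetS : S.det = ((2 * |d|)⁻¹) ^ 4 * N.det := by
      rw [hSN, Matrix.det_smul]
      simp [Fintype.card_fin]
    have habs : |S.det| = (|d| / 4) ^ 2 := by
      rw [hdetS, hdetN, abs_mul, abs_neg, abs_pow, abs_pow, abs_inv, abs_mul, abs_abs,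
        abs_of_nonneg (by norm_num : (0:ℝ) ≤ 2)]
      have hdne : |d| ≠ 0 := abs_ne_zero.mpr hd
      field_simp
      ring
    rw [habs, Real.sqrt_sq (by positivity)]
    ring
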